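/- For the scalar ODE ẋ = −ρx − κ₁|x|^{γ₁} sgn(x) − κ₂|x|^{γ₂} sgn(x) with ρ, κ₁, κ₂ > 0, 0 < γ₁ < 1 < γ₂, and |x₀| < 1, the settling time satisfies T(x₀) ≥ ln(1 + ((ρ+κ₂)/κ₁)|x₀|^{1−γ₁}) / ((ρ+κ₂)(1−γ₁)). -/

import Mathlib

/-- Signed power `|y|^γ sgn(y)` appearing in the attracting laws. -/
noncomputable def spow (y γ : ℝ) : ℝ := |y| ^ γ * Real.sign y

lemma spow_of_pos {y : ℝ} (hy : 0 < y) (γ : ℝ) : spow y γ = y ^ γ := by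
  simp [spow, abs_of_pos hy, Real.sign_of_pos hy]

lemma spow_neg' (y γ : ℝ) : spow (-y) γ = -spow y γ := by
  simp [spow, Real.sign_neg, abs_neg]

lemma alg_id (ρ κ₁ κ₂ γ₁ γ₂ p : ℝ) (hp : 0 < p) :
    (-ρ * p - κ₁ * p ^ γ₁ - κ₂ * p ^ γ₂) * (1 - γ₁) * p ^ (1 - γ₁ - 1)
      = (1 - γ₁) * (-ρ * p ^ (1 - γ₁) - κ₁ - κ₂ * p ^ (γ₂ - γ₁)) := by
  have h : (1 : ℝ) - γ₁ - 1 = -γ₁ := by ring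
  rw [h]
  have e1 : p ^ (-γ₁) * p = p ^ (1 - γ₁) := by
    have := Real.rpow_add_one (ne_of_gt hp) (-γ₁)
    rw [show -γ₁ + 1 = 1 - γ₁ from by ring] at this
    linarith [this]
  have e2 : p ^ (-γ₁) * p ^ γ₁ = 1 := by
    rw [← Real.rpow_add hp]
    simp
  have e3 : p ^ (-γ₁) * p ^ γ₂ = p ^ (γ₂ - γ₁) := by
    rw [← Real.rpow_add hp]
    ring_nf
  linear_combination (1 - γ₁) * (-ρ * e1 - κ₁ * e2 - κ₂ * e3)

lemma key (ρ κ₁ κ₂ γ₁ γ₂ : ℝ)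
    (hρ : 0 < ρ) (hκ₁ : 0 < κ₁) (hκ₂ : 0 < κ₂)
    (hγ₁0 : 0 < γ₁) (hγ₁1 : γ₁ < 1) (hγ₂ : 1 < γ₂)
    (x : ℝ → ℝ) (x₀ : ℝ) (hx0 : x 0 = x₀) (hpos : 0 < x₀) (hx₀ : x₀ < 1)
    (hode : ∀ t, 0 ≤ t →
      HasDerivAt x (-ρ * x t - κ₁ * spow (x t) γ₁ - κ₂ * spow (x t) γ₂) t) :
    sInf {t : ℝ | 0 ≤ t ∧ x t = 0} ≥
      Real.log (1 + (ρ + κ₂) / κ₁ * x₀ ^ (1 - γ₁)) / ((ρ + κ₂) * (1 - γ₁)) := by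
  have hγ : 0 < 1 - γ₁ := by linarith
  have hρκ : 0 < ρ + κ₂ := by linarith
  have ha : 0 < (ρ + κ₂) * (1 - γ₁) := mul_pos hρκ hγ
  have hr : 0 < κ₁ / (ρ + κ₂) := div_pos hκ₁ hρκ
  have hX0 : 0 < x₀ ^ (1 - γ₁) := Real.rpow_pos_of_pos hpos _
  set S := {t : ℝ | 0 ≤ t ∧ x t = 0} with hSdef
  have contx : ∀ ⦃t : ℝ⦄, 0 ≤ t → ContinuousAt x t := fun t ht => (hode t ht).continuousAt
  have contOn : ∀ T : ℝ, ContinuousOn x (Set.Icc 0 T) :=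
    fun T t ht => (contx ht.1).continuousWithinAt
  have hu : ∀ ⦃t : ℝ⦄, 0 ≤ t → 0 < x t →
      HasDerivAt (fun s => x s ^ (1 - γ₁))
        ((1 - γ₁) * (-ρ * x t ^ (1 - γ₁) - κ₁ - κ₂ * x t ^ (γ₂ - γ₁))) t := by
    intro t ht hxt
    have hd := (hode t ht).rpow_const (p := 1 - γ₁) (Or.inl (ne_of_gt hxt))
    rw [spow_of_pos hxt, spow_of_pos hxt] at hd
    rwa [alg_id ρ κ₁ κ₂ γ₁ γ₂ (x t) hxt] at hd
  -- Step A : S is nonempty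
  have hSne : S.Nonempty := by
    by_contra hne
    have hnz : ∀ t, 0 ≤ t → x t ≠ 0 := fun t ht h0 => hne ⟨t, ht, h0⟩
    have xpos : ∀ t, 0 ≤ t → 0 < x t := by
      intro t ht
      rcases (hnz t ht).lt_or_gt with hlt | hlt
      · exfalso
        have h0 : (0:ℝ) ∈ Set.Icc (x t) (x 0) := ⟨hlt.le, by rw [hx0]; exact hpos.le⟩
        obtain ⟨s, hs, hxs⟩ := intermediate_value_Icc' ht (contOn t) h0
        exact hnz s hs.1 hxs
      · exact hlt
    set T := (x₀ ^ (1 - γ₁) + 1) / ((1 - γ₁) * κ₁) with hTdef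
    have hT : 0 < T := div_pos (by linarith) (mul_pos hγ hκ₁)
    have hg : ∀ t ∈ Set.Ioo (0:ℝ) T,
        HasDerivAt (fun s => x s ^ (1 - γ₁) + (1 - γ₁) * κ₁ * s)
          ((1 - γ₁) * (-ρ * x t ^ (1 - γ₁) - κ₁ - κ₂ * x t ^ (γ₂ - γ₁)) + (1 - γ₁) * κ₁) t := by
      intro t ht
      exact (hu ht.1.le (xpos t ht.1.le)).add
        (by simpa using (hasDerivAt_id t).const_mul ((1 - γ₁) * κ₁))
    have anti : AntitoneOn (fun s => x s ^ (1 - γ₁) + (1 - γ₁) * κ₁ * s) (Set.Icc 0 T) := by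
      apply antitoneOn_of_deriv_nonpos (convex_Icc 0 T)
      · exact ((contOn T).rpow_const (fun t _ => Or.inr hγ.le)).add
          (continuous_const.mul continuous_id).continuousOn
      · rw [interior_Icc]
        exact fun t ht => (hg t ht).differentiableAt.differentiableWithinAt
      · rw [interior_Icc]
        intro t ht
        rw [(hg t ht).deriv]
        have h1 : 0 < x t ^ (1 - γ₁) := Real.rpow_pos_of_pos (xpos t ht.1.le) _
        have h2 : 0 < x t ^ (γ₂ - γ₁) := Real.rpow_pos_of_pos (xpos t ht.1.le) _
        nlinarith [mul_pos hγ (mul_pos hρ h1), mul_pos hγ (mul_pos hκ₂ h2)]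
    have hle := anti (Set.left_mem_Icc.2 hT.le) (Set.right_mem_Icc.2 hT.le) hT.le
    simp only [hx0, mul_zero, add_zero] at hle
    have hgT : (1 - γ₁) * κ₁ * T = x₀ ^ (1 - γ₁) + 1 := by
      rw [hTdef]
      field_simp
    have hx0T : 0 < x T ^ (1 - γ₁) := Real.rpow_pos_of_pos (xpos T hT.le) _
    nlinarith [hle, hgT, hx0T]
  -- Step B : the infimum is attained
  have bdd : BddBelow S := ⟨0, fun t ht => ht.1⟩
  have hτ0 : 0 ≤ sInf S := le_csInf hSne (fun t ht => ht.1)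
  have hxτ : x (sInf S) = 0 := by
    have hcl : sInf S ∈ closure S := csInf_mem_closure hSne bdd
    have h1 : x (sInf S) ∈ closure (x '' S) := mem_closure_image (contx hτ0) hcl
    have h2 : x '' S ⊆ {0} := by
      rintro y ⟨t, ht, rfl⟩
      exact ht.2
    have h3 := closure_mono h2 h1
    rwa [closure_singleton, Set.mem_singleton_iff] at h3
  set τ := sInf S with hτdef
  have hτpos : 0 < τ := by
    rcases hτ0.lt_or_eq with h | h
    · exact h
    · exfalso
      rw [← h] at hxτ
      rw [hx0] at hxτ
      linarith
  -- Step C : x is positive before τ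
  have xpos : ∀ t ∈ Set.Ico (0:ℝ) τ, 0 < x t := by
    intro t ht
    have hne : x t ≠ 0 := fun h0 => absurd (csInf_le bdd ⟨ht.1, h0⟩) (not_le.2 ht.2)
    rcases hne.lt_or_gt with hlt | hlt
    · exfalso
      have h0 : (0:ℝ) ∈ Set.Icc (x t) (x 0) := ⟨hlt.le, by rw [hx0]; exact hpos.le⟩
      obtain ⟨s, hs, hxs⟩ := intermediate_value_Icc' ht.1 (contOn t) h0
      have hτs : τ ≤ s := csInf_le bdd ⟨hs.1, hxs⟩
      linarith [hs.2, ht.2]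
    · exact hlt
  -- Step D : x is below 1 on [0, τ)
  have anti : AntitoneOn x (Set.Icc 0 τ) := by
    apply antitoneOn_of_deriv_nonpos (convex_Icc 0 τ) (contOn τ)
    · rw [interior_Icc]
      exact fun t ht => (hode t ht.1.le).differentiableAt.differentiableWithinAt
    · rw [interior_Icc]
      intro t ht
      have hxt := xpos t ⟨ht.1.le, ht.2⟩
      rw [(hode t ht.1.le).deriv, spow_of_pos hxt, spow_of_pos hxt]
      have h1 : 0 < x t ^ γ₁ := Real.rpow_pos_of_pos hxt _
      have h2 : 0 < x t ^ γ₂ := Real.rpow_pos_of_pos hxt _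
      nlinarith
  have xle : ∀ t ∈ Set.Ico (0:ℝ) τ, x t < 1 := by
    intro t ht
    have h := anti (Set.left_mem_Icc.2 hτ0) ⟨ht.1, ht.2.le⟩ ht.1
    rw [hx0] at h
    linarith
  -- Step E : comparison function v is monotone
  have hv : ∀ t ∈ Set.Ioo (0:ℝ) τ,
      HasDerivAt (fun s => Real.exp ((ρ + κ₂) * (1 - γ₁) * s) * (x s ^ (1 - γ₁) + κ₁ / (ρ + κ₂)))
        (Real.exp ((ρ + κ₂) * (1 - γ₁) * t) * ((ρ + κ₂) * (1 - γ₁)) * (x t ^ (1 - γ₁) + κ₁ / (ρ + κ₂))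
          + Real.exp ((ρ + κ₂) * (1 - γ₁) * t)
            * ((1 - γ₁) * (-ρ * x t ^ (1 - γ₁) - κ₁ - κ₂ * x t ^ (γ₂ - γ₁)))) t := by
    intro t ht
    have he : HasDerivAt (fun s : ℝ => Real.exp ((ρ + κ₂) * (1 - γ₁) * s))
        (Real.exp ((ρ + κ₂) * (1 - γ₁) * t) * ((ρ + κ₂) * (1 - γ₁))) t := by
      simpa using ((hasDerivAt_id t).const_mul ((ρ + κ₂) * (1 - γ₁))).exp
    have hu' := (hu ht.1.le (xpos t ⟨ht.1.le, ht.2⟩)).add_const (κ₁ / (ρ + κ₂))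
    have h := he.mul hu'
    convert h using 1
    try ring
    all_goals rfl
  have mono : MonotoneOn
      (fun s => Real.exp ((ρ + κ₂) * (1 - γ₁) * s) * (x s ^ (1 - γ₁) + κ₁ / (ρ + κ₂)))
      (Set.Icc 0 τ) := by
    apply monotoneOn_of_deriv_nonneg (convex_Icc 0 τ)
    · exact ((Real.continuous_exp.comp (continuous_const.mul continuous_id)).continuousOn).mul
        (((contOn τ).rpow_const (fun t _ => Or.inr hγ.le)).add continuousOn_const)
    · rw [interior_Icc]
      exact fun t ht => (hv t ht).differentiableAt.differentiableWithinAt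
    · rw [interior_Icc]
      intro t ht
      rw [(hv t ht).deriv]
      have hxt := xpos t ⟨ht.1.le, ht.2⟩
      have hx1 := xle t ⟨ht.1.le, ht.2⟩
      have hw : x t ^ (γ₂ - γ₁) ≤ x t ^ (1 - γ₁) :=
        Real.rpow_le_rpow_of_exponent_ge hxt hx1.le (by linarith)
      have hexp : 0 < Real.exp ((ρ + κ₂) * (1 - γ₁) * t) := Real.exp_pos _
      have hval : Real.exp ((ρ + κ₂) * (1 - γ₁) * t) * ((ρ + κ₂) * (1 - γ₁))
            * (x t ^ (1 - γ₁) + κ₁ / (ρ + κ₂))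
          + Real.exp ((ρ + κ₂) * (1 - γ₁) * t)
            * ((1 - γ₁) * (-ρ * x t ^ (1 - γ₁) - κ₁ - κ₂ * x t ^ (γ₂ - γ₁)))
          = Real.exp ((ρ + κ₂) * (1 - γ₁) * t)
            * ((1 - γ₁) * κ₂ * (x t ^ (1 - γ₁) - x t ^ (γ₂ - γ₁))) := by
        field_simp
        ring
      rw [hval]
      have h1 : 0 ≤ (1 - γ₁) * κ₂ * (x t ^ (1 - γ₁) - x t ^ (γ₂ - γ₁)) := by
        apply mul_nonneg (by positivity)
        linarith
      exact mul_nonneg hexp.le h1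
  -- Step F : conclusion
  have hvv := mono (Set.left_mem_Icc.2 hτ0) (Set.right_mem_Icc.2 hτ0) hτ0
  simp only [mul_zero, Real.exp_zero, one_mul, hx0, hxτ,
    Real.zero_rpow (by linarith : (1:ℝ) - γ₁ ≠ 0), zero_add] at hvv
  -- hvv : x₀ ^ (1 - γ₁) + κ₁ / (ρ + κ₂) ≤ exp (a τ) * (κ₁ / (ρ + κ₂))
  have h2 : (x₀ ^ (1 - γ₁) + κ₁ / (ρ + κ₂)) / (κ₁ / (ρ + κ₂))
      = 1 + (ρ + κ₂) / κ₁ * x₀ ^ (1 - γ₁) := by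
    field_simp
    ring
  have h3 : (x₀ ^ (1 - γ₁) + κ₁ / (ρ + κ₂)) / (κ₁ / (ρ + κ₂))
      ≤ Real.exp ((ρ + κ₂) * (1 - γ₁) * τ) := (div_le_iff₀ hr).2 hvv
  rw [h2] at h3
  have hlog : Real.log (1 + (ρ + κ₂) / κ₁ * x₀ ^ (1 - γ₁)) ≤ (ρ + κ₂) * (1 - γ₁) * τ :=
    (Real.log_le_iff_le_exp (by nlinarith [div_pos hρκ hκ₁])).2 h3
  rw [ge_iff_le, div_le_iff₀ ha]
  linarith [hlog]

theorem stmt_8 (ρ κ₁ κ₂ γ₁ γ₂ : ℝ)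
    (hρ : 0 < ρ) (hκ₁ : 0 < κ₁) (hκ₂ : 0 < κ₂)
    (hγ₁0 : 0 < γ₁) (hγ₁1 : γ₁ < 1) (hγ₂ : 1 < γ₂)
    (x : ℝ → ℝ) (x₀ : ℝ) (hx0 : x 0 = x₀) (hx₀ : |x₀| < 1)
    (hode : ∀ t, 0 ≤ t →
      HasDerivAt x (-ρ * x t - κ₁ * spow (x t) γ₁ - κ₂ * spow (x t) γ₂) t) :
    sInf {t : ℝ | 0 ≤ t ∧ x t = 0} ≥
      Real.log (1 + (ρ + κ₂) / κ₁ * |x₀| ^ (1 - γ₁)) / ((ρ + κ₂) * (1 - γ₁)) := by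
  rcases lt_trichotomy x₀ 0 with hneg | hzero | hposx
  · -- x₀ < 0 : apply `key` to -x
    have habs : |x₀| = -x₀ := abs_of_neg hneg
    rw [habs]
    have hode' : ∀ t, 0 ≤ t → HasDerivAt (fun s => -x s)
        (-ρ * (-x t) - κ₁ * spow (-x t) γ₁ - κ₂ * spow (-x t) γ₂) t := by
      intro t ht
      have h := (hode t ht).neg
      convert h using 1
      · rfl
      · rfl
      · rfl
      rw [spow_neg', spow_neg']
      ring
    have h := key ρ κ₁ κ₂ γ₁ γ₂ hρ hκ₁ hκ₂ hγ₁0 hγ₁1 hγ₂ (fun s => -x s) (-x₀)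
      (by simp [hx0]) (by linarith) (by rw [habs] at hx₀; linarith) hode'
    have hset : {t : ℝ | 0 ≤ t ∧ -x t = 0} = {t : ℝ | 0 ≤ t ∧ x t = 0} := by
      ext t; simp [neg_eq_zero]
    rwa [hset] at h
  · -- x₀ = 0
    subst hzero
    have hrhs : Real.log (1 + (ρ + κ₂) / κ₁ * |(0:ℝ)| ^ (1 - γ₁)) / ((ρ + κ₂) * (1 - γ₁)) = 0 := by
      rw [abs_zero, Real.zero_rpow (by linarith : (1:ℝ) - γ₁ ≠ 0)]
      simp
    rw [hrhs]
    exact Real.sInf_nonneg (fun t ht => ht.1)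
  · rw [abs_of_pos hposx] at *
    exact key ρ κ₁ κ₂ γ₁ γ₂ hρ hκ₁ hκ₂ hγ₁0 hγ₁1 hγ₂ x x₀ hx0 hposx hx₀ hode
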